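/- Suppose some pole λ_m is purely imaginary and nonzero (Re(λ_m) = 0, λ_m ≠ 0) and its residue matrix φ_m is nonzero. Then for every real ω > |λ_m|, the real-valued function ν ↦ tr( H(iν) · H(iν)^* ) (the squared Frobenius norm of H(iν), defined for all ν ∈ [−ω,ω] except the finitely many points where iν is a pole; here ^* denotes conjugate transpose) is not integrable on the interval [−ω, ω]. -/

import Mathlib

open Complex Matrix MeasureTheory BigOperators

/-- Transfer function `H(s) = Σᵢ (s − λᵢ)⁻¹ • φᵢ + D`. -/
noncomputable def transferH {n n_u n_y : ℕ} (lam : Fin n → ℂ)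
    (φ : Fin n → Matrix (Fin n_y) (Fin n_u) ℂ) (D : Matrix (Fin n_y) (Fin n_u) ℂ)
    (s : ℂ) : Matrix (Fin n_y) (Fin n_u) ℂ :=
  (∑ i, (s - lam i)⁻¹ • φ i) + D

lemma entry_sq_le_trace_re (n_u n_y : ℕ) (A : Matrix (Fin n_y) (Fin n_u) ℂ)
    (p : Fin n_y) (q : Fin n_u) :
    ‖A p q‖ ^ 2 ≤ ((A * Aᴴ).trace).re := by
  have h : ((A * Aᴴ).trace).re = ∑ i, ∑ j, Complex.normSq (A i j) := by
    simp [Matrix.trace, Matrix.mul_apply, Matrix.diag, Complex.mul_conj, Complex.re_sum]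
  rw [h]
  calc ‖A p q‖ ^ 2 = Complex.normSq (A p q) := Complex.sq_norm _
  _ ≤ ∑ j, Complex.normSq (A p j) :=
      Finset.single_le_sum (fun j _ => Complex.normSq_nonneg _) (Finset.mem_univ q)
  _ ≤ _ := Finset.single_le_sum (f := fun i => ∑ j, Complex.normSq (A i j))
      (fun i _ => Finset.sum_nonneg fun j _ => Complex.normSq_nonneg _) (Finset.mem_univ p)

theorem stmt_6 (n n_u n_y : ℕ) (hn : 0 < n) (hnu : 0 < n_u) (hny : 0 < n_y)
    (lam : Fin n → ℂ) (hdist : Function.Injective lam)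
    (φ : Fin n → Matrix (Fin n_y) (Fin n_u) ℂ) (D : Matrix (Fin n_y) (Fin n_u) ℂ)
    (m : Fin n) (hre : (lam m).re = 0) (hne : lam m ≠ 0) (hφ : φ m ≠ 0)
    (ω : ℝ) (hω : ‖lam m‖ < ω) :
    ¬ IntervalIntegrable
        (fun ν : ℝ =>
          ((transferH lam φ D (Complex.I * (ν : ℂ)) *
            (transferH lam φ D (Complex.I * (ν : ℂ)))ᴴ).trace).re)
        volume (-ω) ω := by
  set f : ℝ → ℝ := fun ν : ℝ =>
    ((transferH lam φ D (Complex.I * (ν : ℂ)) *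
      (transferH lam φ D (Complex.I * (ν : ℂ)))ᴴ).trace).re with hf
  obtain ⟨p, q, hpq⟩ : ∃ p q, φ m p q ≠ 0 := by
    by_contra h
    push_neg at h
    exact hφ (by ext p q; simpa using h p q)
  set ν₀ := (lam m).im with hν₀
  have hlam : lam m = Complex.I * (ν₀ : ℂ) := by
    apply Complex.ext <;> simp [hre, hν₀]
  set c := ‖φ m p q‖ with hcdef
  have hc : 0 < c := by
    simpa [hcdef] using (norm_pos_iff.mpr hpq)
  -- the "rest" of the entry (p,q), continuous near ν₀
  set r : ℝ → ℂ := fun ν =>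
    (∑ i ∈ Finset.univ.erase m, (Complex.I * (ν : ℂ) - lam i)⁻¹ * φ i p q) + D p q with hrdef
  have hentry : ∀ ν : ℝ, transferH lam φ D (Complex.I * (ν : ℂ)) p q
      = (Complex.I * (ν : ℂ) - lam m)⁻¹ * φ m p q + r ν := by
    intro ν
    simp only [transferH, Matrix.add_apply, Matrix.sum_apply, Matrix.smul_apply, smul_eq_mul,
      hrdef]
    rw [← Finset.add_sum_erase _ _ (Finset.mem_univ m)]
    ring
  have hrcont : ContinuousAt r ν₀ := by
    apply ContinuousAt.add _ continuousAt_const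
    refine tendsto_finset_sum _ fun i hi => ?_
    have hiz : Complex.I * (ν₀ : ℂ) - lam i ≠ 0 := by
      rw [sub_ne_zero, ← hlam]
      exact fun h => (Finset.mem_erase.1 hi).1 (hdist h.symm)
    exact (((continuousAt_const.mul
      (Complex.continuous_ofReal.continuousAt)).sub continuousAt_const).inv₀ hiz).mul
      continuousAt_const
  set M := ‖r ν₀‖ + 1 with hMdef
  have hM : 0 < M := by positivity
  have hMev : ∀ᶠ ν in nhds ν₀, ‖r ν‖ ≤ M := by
    have : Filter.Tendsto (fun ν => ‖r ν‖) (nhds ν₀) (nhds (‖r ν₀‖)) :=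
      (continuous_norm.continuousAt.comp hrcont)
    exact this.eventually_le_const (by simp [hMdef])
  set δ := c / (2 * M) with hδdef
  have hδ : 0 < δ := by positivity
  have hδev : ∀ᶠ ν in nhds ν₀, |ν - ν₀| ≤ δ := by
    filter_upwards [Metric.ball_mem_nhds ν₀ hδ] with x hx
    exact le_of_lt (by simpa [Real.dist_eq] using hx)
  have hfpos : ∀ x : ℝ, x ≠ ν₀ → ‖r x‖ ≤ M → |x - ν₀| ≤ δ →
      c ^ 2 / (4 * |x - ν₀| ^ 2) ≤ f x := by
    intro x hx hMx hdx
    set d := |x - ν₀| with hddef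
    have hd : 0 < d := abs_pos.2 (sub_ne_zero.2 hx)
    have habs1 : ‖Complex.I * (x : ℂ) - lam m‖ = d := by
      rw [hlam, ← mul_sub, norm_mul, Complex.norm_I, one_mul, ← Complex.ofReal_sub,
        Complex.norm_real, Real.norm_eq_abs]
    have hMle : M ≤ c / (2 * d) := by
      have h1 : c / (2 * δ) = M := by
        rw [hδdef]; field_simp
      rw [← h1]
      gcongr
    have hlow : c / (2 * d) ≤ ‖transferH lam φ D (Complex.I * (x : ℂ)) p q‖ := by
      rw [hentry]
      have h2 : ‖(Complex.I * (x : ℂ) - lam m)⁻¹ * φ m p q‖ = c / d := by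
        rw [norm_mul, norm_inv, habs1, ← hcdef]; ring
      have h3' : ‖(Complex.I * (x : ℂ) - lam m)⁻¹ * φ m p q‖
          ≤ ‖(Complex.I * (x : ℂ) - lam m)⁻¹ * φ m p q + r x‖
            + ‖r x‖ := by
        simpa using norm_add_le
          ((Complex.I * (x : ℂ) - lam m)⁻¹ * φ m p q + r x) (-(r x))
      have h3 : ‖(Complex.I * (x : ℂ) - lam m)⁻¹ * φ m p q‖
          - ‖r x‖
          ≤ ‖(Complex.I * (x : ℂ) - lam m)⁻¹ * φ m p q + r x‖ := by
        linarith
      rw [h2] at h3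
      have : c / d - M ≥ c / (2 * d) := by
        have : c / d = c / (2 * d) + c / (2 * d) := by field_simp; ring
        linarith
      linarith
    have hsq : (c / (2 * d)) ^ 2
        ≤ ‖transferH lam φ D (Complex.I * (x : ℂ)) p q‖ ^ 2 :=
      pow_le_pow_left₀ (by positivity) hlow 2
    have htr := entry_sq_le_trace_re n_u n_y (transferH lam φ D (Complex.I * (x : ℂ))) p q
    have heq : (c / (2 * d)) ^ 2 = c ^ 2 / (4 * d ^ 2) := by
      field_simp; ring
    have hfx : f x = ((transferH lam φ D (Complex.I * (x : ℂ)) *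
        (transferH lam φ D (Complex.I * (x : ℂ)))ᴴ).trace).re := rfl
    rw [hfx]
    linarith
  have hO : (fun x : ℝ => (x - ν₀)⁻¹) =O[nhdsWithin ν₀ {ν₀}ᶜ] f := by
    rw [Asymptotics.isBigO_iff]
    refine ⟨4 * δ / c ^ 2, ?_⟩
    filter_upwards [self_mem_nhdsWithin, nhdsWithin_le_nhds hMev, nhdsWithin_le_nhds hδev]
      with x hx hMx hdx
    have hx' : x ≠ ν₀ := hx
    set d := |x - ν₀| with hddef
    have hd : 0 < d := abs_pos.2 (sub_ne_zero.2 hx')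
    have hflow := hfpos x hx' hMx hdx
    have hfpos' : 0 < f x := lt_of_lt_of_le (by positivity) hflow
    rw [Real.norm_eq_abs, Real.norm_eq_abs, abs_inv, ← hddef, abs_of_pos hfpos']
    calc d⁻¹ = d / d ^ 2 := by field_simp
    _ ≤ δ / d ^ 2 := by apply div_le_div_of_nonneg_right hdx (by positivity)
    _ = (4 * δ / c ^ 2) * (c ^ 2 / (4 * d ^ 2)) := by field_simp
    _ ≤ (4 * δ / c ^ 2) * f x := by
        apply mul_le_mul_of_nonneg_left hflow (by positivity)
  have hω0 : 0 < ω := lt_of_le_of_lt (norm_nonneg _) hω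
  have habsν₀ : |ν₀| < ω := by
    have : ‖lam m‖ = |ν₀| := by
      rw [hlam]; simp
    linarith [this ▸ hω]
  refine not_intervalIntegrable_of_sub_inv_isBigO_punctured hO (by linarith) ?_
  rw [Set.uIcc_of_le (by linarith)]
  constructor <;> [linarith [abs_lt.1 habsν₀ |>.1]; linarith [abs_lt.1 habsν₀ |>.2]]
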